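/- Assume limsup_{n→∞} n⁴ a_n = ∞. Then for every integer k ≥ 1, the operator Lᵏ does not act continuously on the space of bounded variation functions: for every constant C > 0 there exists f : [0,1) → ℝ of bounded variation with Var(f) ≤ 2 and sup_{x∈[0,1)} |f(x)| ≤ 1 such that Var(Lᵏ f) > C. -/

import Mathlib

open MeasureTheory Set Filter

noncomputable section

namespace Gouezel

/-- `b a n = 4 * ∑_{k=1}^n a_k` (left endpoints of the intervals `I_n`). -/
def b (a : ℕ → ℝ) (n : ℕ) : ℝ := 4 * ∑ k ∈ Finset.range n, a (k + 1)

/-- `b_∞ = 4 * ∑_{n=1}^∞ a_n`. -/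
def binf (a : ℕ → ℝ) : ℝ := 4 * ∑' n : ℕ, a (n + 1)

/-- The length `|J| = 1 - b_∞` of the interval `J = [b_∞, 1)`. -/
def lenJ (a : ℕ → ℝ) : ℝ := 1 - binf a

/-- `v_n'(x) = a_n (1 + 2 cos²(2π n⁴ x))`. -/
def vd (a : ℕ → ℝ) (n : ℕ) (x : ℝ) : ℝ :=
  a n * (1 + 2 * Real.cos (2 * Real.pi * (n : ℝ) ^ 4 * x) ^ 2)

/-- `w_n'(x) = a_n (1 + 2 sin²(2π n⁴ x))`. -/
def wd (a : ℕ → ℝ) (n : ℕ) (x : ℝ) : ℝ :=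
  a n * (1 + 2 * Real.sin (2 * Real.pi * (n : ℝ) ^ 4 * x) ^ 2)

/-- The inverse branch `v_n(x) = b_{n-1} + ∫_0^x v_n'(t) dt`. -/
def v (a : ℕ → ℝ) (n : ℕ) (x : ℝ) : ℝ := b a (n - 1) + ∫ t in (0:ℝ)..x, vd a n t

/-- The inverse branch `w_n(x) = b_{n-1} + 2 a_n + ∫_0^x w_n'(t) dt`. -/
def w (a : ℕ → ℝ) (n : ℕ) (x : ℝ) : ℝ :=
  b a (n - 1) + 2 * a n + ∫ t in (0:ℝ)..x, wd a n t

/-- The affine inverse branches `u_j(x) = b_∞ + (j-1)|J|/N + (|J|/N) x`, `1 ≤ j ≤ N`. -/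
def u (a : ℕ → ℝ) (N : ℕ) (j : ℕ) (x : ℝ) : ℝ :=
  binf a + ((j : ℝ) - 1) * (lenJ a / N) + (lenJ a / N) * x

/-- The transfer operator on complex-valued functions. -/
def L (a : ℕ → ℝ) (N : ℕ) (f : ℝ → ℂ) (x : ℝ) : ℂ :=
  (∑' n : ℕ, ((vd a (n + 1) x : ℂ) * f (v a (n + 1) x)
      + (wd a (n + 1) x : ℂ) * f (w a (n + 1) x)))
    + ((lenJ a / (N : ℝ) : ℝ) : ℂ) * ∑ j ∈ Finset.range N, f (u a N (j + 1) x)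

/-- The transfer operator on real-valued functions. -/
def LR (a : ℕ → ℝ) (N : ℕ) (f : ℝ → ℝ) (x : ℝ) : ℝ :=
  (∑' n : ℕ, (vd a (n + 1) x * f (v a (n + 1) x) + wd a (n + 1) x * f (w a (n + 1) x)))
    + (lenJ a / N) * ∑ j ∈ Finset.range N, f (u a N (j + 1) x)

/-- The part `L_n` of the transfer operator coming from the branches `v_n, w_n`. -/
def Ln (a : ℕ → ℝ) (n : ℕ) (f : ℝ → ℂ) (x : ℝ) : ℂ :=
  (vd a n x : ℂ) * f (v a n x) + (wd a n x : ℂ) * f (w a n x)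

/-- Sup norm of `f` on `[0,1)`. -/
def supNorm (f : ℝ → ℂ) : ℝ := ⨆ x : Ico (0:ℝ) 1, ‖f x.1‖

/-- Best Lipschitz constant of `f` on `[0,1)` (the term at `x = y` is `0/0 = 0`). -/
def lipConst (f : ℝ → ℂ) : ℝ :=
  ⨆ p : Ico (0:ℝ) 1 × Ico (0:ℝ) 1, ‖f p.1.1 - f p.2.1‖ / |p.1.1 - p.2.1|

/-- Lipschitz norm `‖f‖_Lip = sup|f| + Lip(f)` on `[0,1)`. -/
def lipNorm (f : ℝ → ℂ) : ℝ := supNorm f + lipConst f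

/-- `f` is bounded and Lipschitz on `[0,1)`. -/
def BddLip (f : ℝ → ℂ) : Prop :=
  ∃ K : ℝ, (∀ x ∈ Ico (0:ℝ) 1, ‖f x‖ ≤ K) ∧
    ∀ x ∈ Ico (0:ℝ) 1, ∀ y ∈ Ico (0:ℝ) 1, ‖f x - f y‖ ≤ K * |x - y|

/-- The specific choice `a_n = 1/(100 n³)`. -/
def aa (n : ℕ) : ℝ := 1 / (100 * (n : ℝ) ^ 3)

/-- Standing hypotheses on the sequence `(a_n)`: positivity and `∑ a_n < 1/4`. -/
def StdHyp (a : ℕ → ℝ) : Prop :=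
  (∀ n : ℕ, 1 ≤ n → 0 < a n) ∧ Summable (fun n : ℕ => a (n + 1)) ∧
    (∑' n : ℕ, a (n + 1)) < 1 / 4

/-- `T : [0,1) → [0,1)` has the maps `v_n, w_n` (`n ≥ 1`) and `u_j` (`1 ≤ j ≤ N`)
as inverse branches. -/
def InverseBranches (a : ℕ → ℝ) (N : ℕ) (T : ℝ → ℝ) : Prop :=
  MapsTo T (Ico (0:ℝ) 1) (Ico (0:ℝ) 1) ∧
    ∀ x ∈ Ico (0:ℝ) 1,
      (∀ n : ℕ, 1 ≤ n → T (v a n x) = x ∧ T (w a n x) = x) ∧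
      (∀ j : ℕ, 1 ≤ j → j ≤ N → T (u a N j x) = x)

/-! ### Helper lemmas -/

open Real in
lemma abs_sin_sub_sin_le (x y : ℝ) : |Real.sin x - Real.sin y| ≤ |x - y| := by
  rw [Real.sin_sub_sin]
  have h1 : |Real.sin ((x - y) / 2)| ≤ |(x - y) / 2| := Real.abs_sin_le_abs
  have h2 : |Real.cos ((x + y) / 2)| ≤ 1 := Real.abs_cos_le_one _
  calc |2 * Real.sin ((x - y) / 2) * Real.cos ((x + y) / 2)|
      = 2 * |Real.sin ((x - y) / 2)| * |Real.cos ((x + y) / 2)| := by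
        rw [abs_mul, abs_mul]; simp [abs_of_nonneg]
    _ ≤ 2 * |(x - y) / 2| * 1 := by
        apply mul_le_mul (by nlinarith [abs_nonneg (Real.sin ((x-y)/2))]) h2
          (abs_nonneg _) (by positivity)
    _ = |x - y| := by rw [abs_div]; simp; ring

lemma cos_int_pi (z : ℤ) : Real.cos ((z : ℝ) * Real.pi) = (-1) ^ z := by
  simpa using Real.cos_add_int_mul_pi 0 z

/-- step function -/
def stepf (A x : ℝ) : ℝ := if A ≤ x then 1 else 0

/-- bump = indicator of `[A, B)` as a difference of step functions. -/
def bump (A B x : ℝ) : ℝ := stepf A x - stepf B x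

lemma stepf_nonneg (A x : ℝ) : 0 ≤ stepf A x := by unfold stepf; split <;> norm_num

lemma stepf_le_one (A x : ℝ) : stepf A x ≤ 1 := by unfold stepf; split <;> norm_num

lemma stepf_mono (A : ℝ) {x y : ℝ} (h : x ≤ y) : stepf A x ≤ stepf A y := by
  unfold stepf
  by_cases h1 : A ≤ x
  · rw [if_pos h1, if_pos (h1.trans h)]
  · rw [if_neg h1]; split <;> norm_num

lemma bump_eq_one {A B x : ℝ} (h1 : A ≤ x) (h2 : x < B) : bump A B x = 1 := by
  unfold bump stepf; rw [if_pos h1, if_neg (not_le.2 h2)]; norm_num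

lemma bump_eq_zero_left {A B x : ℝ} (h : x < A) (hAB : A ≤ B) : bump A B x = 0 := by
  unfold bump stepf
  rw [if_neg (not_le.2 h), if_neg (not_le.2 (lt_of_lt_of_le h hAB))]; norm_num

lemma bump_eq_zero_right {A B x : ℝ} (h : B ≤ x) (hAB : A ≤ B) : bump A B x = 0 := by
  unfold bump stepf; rw [if_pos (hAB.trans h), if_pos h]; norm_num

lemma abs_bump_le (A B x : ℝ) : |bump A B x| ≤ 1 := by
  unfold bump stepf; split <;> split <;> norm_num

lemma eVariationOn_bump_le (A B : ℝ) (s : Set ℝ) : eVariationOn (bump A B) s ≤ 2 := by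
  apply iSup_le
  rintro ⟨m, u, hu, us⟩
  set g : ℕ → ℝ := fun i => stepf A (u i) + stepf B (u i) with hg
  have step1 : ∀ i, edist (bump A B (u (i+1))) (bump A B (u i))
      ≤ ENNReal.ofReal (g (i+1) - g i) := by
    intro i
    have hu' : u i ≤ u (i+1) := hu (Nat.le_succ i)
    have h1 : stepf A (u i) ≤ stepf A (u (i+1)) := stepf_mono A hu'
    have h2 : stepf B (u i) ≤ stepf B (u (i+1)) := stepf_mono B hu'
    rw [edist_dist, Real.dist_eq]
    apply ENNReal.ofReal_le_ofReal
    simp only [bump, hg]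
    rw [abs_le]
    constructor <;> nlinarith
  calc ∑ i ∈ Finset.range m, edist (bump A B (u (i+1))) (bump A B (u i))
      ≤ ∑ i ∈ Finset.range m, ENNReal.ofReal (g (i+1) - g i) :=
        Finset.sum_le_sum fun i _ => step1 i
    _ = ENNReal.ofReal (∑ i ∈ Finset.range m, (g (i+1) - g i)) := by
        rw [ENNReal.ofReal_sum_of_nonneg]
        intro i _
        have := stepf_mono A (hu (Nat.le_succ i)); have := stepf_mono B (hu (Nat.le_succ i))
        simp only [hg]; linarith
    _ ≤ 2 := by
        rw [Finset.sum_range_sub g]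
        refine le_trans (ENNReal.ofReal_le_ofReal ?_) (by norm_num : ENNReal.ofReal 2 ≤ 2)
        have := stepf_nonneg A (u 0); have := stepf_nonneg B (u 0)
        have := stepf_le_one A (u m); have := stepf_le_one B (u m)
        simp only [hg]; linarith

lemma vd_eq (a : ℕ → ℝ) (n : ℕ) (t : ℝ) :
    vd a n t = a n * (2 + Real.cos (4 * Real.pi * (n:ℝ)^4 * t)) := by
  unfold vd
  rw [Real.cos_sq]
  have : 2 * (2 * Real.pi * (n:ℝ)^4 * t) = 4 * Real.pi * (n:ℝ)^4 * t := by ring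
  rw [this]; ring

lemma wd_eq (a : ℕ → ℝ) (n : ℕ) (t : ℝ) :
    wd a n t = a n * (2 - Real.cos (4 * Real.pi * (n:ℝ)^4 * t)) := by
  unfold wd
  rw [Real.sin_sq]
  rw [Real.cos_sq]
  have : 2 * (2 * Real.pi * (n:ℝ)^4 * t) = 4 * Real.pi * (n:ℝ)^4 * t := by ring
  rw [this]; ring

lemma omega_pos (n : ℕ) (hn : 1 ≤ n) : 0 < 4 * Real.pi * (n:ℝ)^4 := by
  have : (0:ℝ) < (n:ℝ) := by exact_mod_cast hn
  positivity

lemma prim_v (a : ℕ → ℝ) (n : ℕ) (hn : 1 ≤ n) (y : ℝ) :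
    HasDerivAt (fun t => a n * (2*t + Real.sin (4 * Real.pi * (n:ℝ)^4 * t)/(4 * Real.pi * (n:ℝ)^4)))
      (vd a n y) y := by
  have hω : (4 * Real.pi * (n:ℝ)^4) ≠ 0 := (omega_pos n hn).ne'
  have h1 : HasDerivAt (fun t : ℝ => 4 * Real.pi * (n:ℝ)^4 * t) (4 * Real.pi * (n:ℝ)^4) y := by
    simpa using (hasDerivAt_id y).const_mul (4 * Real.pi * (n:ℝ)^4)
  have h2 : HasDerivAt (fun t : ℝ => Real.sin (4 * Real.pi * (n:ℝ)^4 * t))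
      (Real.cos (4 * Real.pi * (n:ℝ)^4 * y) * (4 * Real.pi * (n:ℝ)^4)) y :=
    (Real.hasDerivAt_sin _).comp y h1
  have h3 : HasDerivAt (fun t : ℝ => 2*t + Real.sin (4 * Real.pi * (n:ℝ)^4 * t)/(4 * Real.pi * (n:ℝ)^4))
      (2 + Real.cos (4 * Real.pi * (n:ℝ)^4 * y)) y := by
    have h4 := ((hasDerivAt_id y).const_mul 2).add (h2.div_const (4 * Real.pi * (n:ℝ)^4))
    refine h4.congr_deriv ?_
    field_simp
  have h5 := h3.const_mul (a n)
  rw [vd_eq]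
  exact h5

lemma prim_w (a : ℕ → ℝ) (n : ℕ) (hn : 1 ≤ n) (y : ℝ) :
    HasDerivAt (fun t => a n * (2*t - Real.sin (4 * Real.pi * (n:ℝ)^4 * t)/(4 * Real.pi * (n:ℝ)^4)))
      (wd a n y) y := by
  have hω : (4 * Real.pi * (n:ℝ)^4) ≠ 0 := (omega_pos n hn).ne'
  have h1 : HasDerivAt (fun t : ℝ => 4 * Real.pi * (n:ℝ)^4 * t) (4 * Real.pi * (n:ℝ)^4) y := by
    simpa using (hasDerivAt_id y).const_mul (4 * Real.pi * (n:ℝ)^4)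
  have h2 : HasDerivAt (fun t : ℝ => Real.sin (4 * Real.pi * (n:ℝ)^4 * t))
      (Real.cos (4 * Real.pi * (n:ℝ)^4 * y) * (4 * Real.pi * (n:ℝ)^4)) y :=
    (Real.hasDerivAt_sin _).comp y h1
  have h3 : HasDerivAt (fun t : ℝ => 2*t - Real.sin (4 * Real.pi * (n:ℝ)^4 * t)/(4 * Real.pi * (n:ℝ)^4))
      (2 - Real.cos (4 * Real.pi * (n:ℝ)^4 * y)) y := by
    have h4 := ((hasDerivAt_id y).const_mul 2).sub (h2.div_const (4 * Real.pi * (n:ℝ)^4))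
    refine h4.congr_deriv ?_
    field_simp
  have h5 := h3.const_mul (a n)
  rw [wd_eq]
  exact h5

lemma v_eq (a : ℕ → ℝ) (n : ℕ) (hn : 1 ≤ n) (x : ℝ) :
    v a n x = b a (n-1)
      + a n * (2*x + Real.sin (4 * Real.pi * (n:ℝ)^4 * x)/(4 * Real.pi * (n:ℝ)^4)) := by
  unfold v
  congr 1
  have hcont : IntervalIntegrable (vd a n) MeasureTheory.volume 0 x := by
    apply Continuous.intervalIntegrable
    unfold vd; continuity
  rw [intervalIntegral.integral_eq_sub_of_hasDerivAt (fun y _ => prim_v a n hn y) hcont]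
  simp

lemma w_eq (a : ℕ → ℝ) (n : ℕ) (hn : 1 ≤ n) (x : ℝ) :
    w a n x = b a (n-1) + 2 * a n
      + a n * (2*x - Real.sin (4 * Real.pi * (n:ℝ)^4 * x)/(4 * Real.pi * (n:ℝ)^4)) := by
  unfold w
  congr 1
  have hcont : IntervalIntegrable (wd a n) MeasureTheory.volume 0 x := by
    apply Continuous.intervalIntegrable
    unfold wd; continuity
  rw [intervalIntegral.integral_eq_sub_of_hasDerivAt (fun y _ => prim_w a n hn y) hcont]
  simp

lemma sin_omega_one (n : ℕ) : Real.sin (4 * Real.pi * (n:ℝ)^4 * 1) = 0 := by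
  have h : 4 * Real.pi * (n:ℝ)^4 * 1 = ((4 * n^4 : ℕ) : ℝ) * Real.pi := by push_cast; ring
  rw [h, Real.sin_nat_mul_pi]

lemma v_zero (a : ℕ → ℝ) (m : ℕ) : v a (m+1) 0 = b a m := by
  unfold v; simp

lemma w_zero (a : ℕ → ℝ) (m : ℕ) : w a (m+1) 0 = b a m + 2 * a (m+1) := by
  unfold w; simp

lemma v_one (a : ℕ → ℝ) (m : ℕ) : v a (m+1) 1 = b a m + 2 * a (m+1) := by
  rw [v_eq a (m+1) (Nat.le_add_left 1 m), sin_omega_one]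
  simp; ring

lemma w_one (a : ℕ → ℝ) (m : ℕ) : w a (m+1) 1 = b a m + 4 * a (m+1) := by
  rw [w_eq a (m+1) (Nat.le_add_left 1 m), sin_omega_one]
  simp; ring

lemma v_sub_ge (a : ℕ → ℝ) (m : ℕ) (ham : 0 ≤ a (m+1)) {x y : ℝ} (hxy : x ≤ y) :
    a (m+1) * (y - x) ≤ v a (m+1) y - v a (m+1) x := by
  have hn : 1 ≤ m + 1 := Nat.le_add_left 1 m
  have hω : 0 < 4 * Real.pi * ((m+1:ℕ):ℝ)^4 := omega_pos (m+1) hn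
  rw [v_eq a (m+1) hn, v_eq a (m+1) hn]
  have hsin := abs_sin_sub_sin_le (4 * Real.pi * ((m+1:ℕ):ℝ)^4 * y) (4 * Real.pi * ((m+1:ℕ):ℝ)^4 * x)
  have habs : |4 * Real.pi * ((m+1:ℕ):ℝ)^4 * y - 4 * Real.pi * ((m+1:ℕ):ℝ)^4 * x|
      = 4 * Real.pi * ((m+1:ℕ):ℝ)^4 * (y - x) := by
    rw [abs_of_nonneg (by nlinarith)]; ring
  rw [habs] at hsin
  rw [abs_le] at hsin
  have h1 : -(y - x) ≤ (Real.sin (4 * Real.pi * ((m+1:ℕ):ℝ)^4 * y)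
      - Real.sin (4 * Real.pi * ((m+1:ℕ):ℝ)^4 * x)) / (4 * Real.pi * ((m+1:ℕ):ℝ)^4) := by
    rw [le_div_iff₀ hω]
    nlinarith [hsin.1]
  have h2 := mul_le_mul_of_nonneg_left h1 ham
  have expand : b a (m+1-1)
      + a (m+1) * (2*y + Real.sin (4 * Real.pi * ((m+1:ℕ):ℝ)^4 * y)/(4 * Real.pi * ((m+1:ℕ):ℝ)^4))
      - (b a (m+1-1)
      + a (m+1) * (2*x + Real.sin (4 * Real.pi * ((m+1:ℕ):ℝ)^4 * x)/(4 * Real.pi * ((m+1:ℕ):ℝ)^4)))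
      = 2 * (a (m+1) * (y - x)) + a (m+1) * ((Real.sin (4 * Real.pi * ((m+1:ℕ):ℝ)^4 * y)
      - Real.sin (4 * Real.pi * ((m+1:ℕ):ℝ)^4 * x)) / (4 * Real.pi * ((m+1:ℕ):ℝ)^4)) := by
    ring
  rw [expand]
  nlinarith [h2]

lemma w_sub_ge (a : ℕ → ℝ) (m : ℕ) (ham : 0 ≤ a (m+1)) {x y : ℝ} (hxy : x ≤ y) :
    a (m+1) * (y - x) ≤ w a (m+1) y - w a (m+1) x := by
  have hn : 1 ≤ m + 1 := Nat.le_add_left 1 m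
  have hω : 0 < 4 * Real.pi * ((m+1:ℕ):ℝ)^4 := omega_pos (m+1) hn
  rw [w_eq a (m+1) hn, w_eq a (m+1) hn]
  have hsin := abs_sin_sub_sin_le (4 * Real.pi * ((m+1:ℕ):ℝ)^4 * y) (4 * Real.pi * ((m+1:ℕ):ℝ)^4 * x)
  have habs : |4 * Real.pi * ((m+1:ℕ):ℝ)^4 * y - 4 * Real.pi * ((m+1:ℕ):ℝ)^4 * x|
      = 4 * Real.pi * ((m+1:ℕ):ℝ)^4 * (y - x) := by
    rw [abs_of_nonneg (by nlinarith)]; ring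
  rw [habs] at hsin
  rw [abs_le] at hsin
  have h1 : (Real.sin (4 * Real.pi * ((m+1:ℕ):ℝ)^4 * y)
      - Real.sin (4 * Real.pi * ((m+1:ℕ):ℝ)^4 * x)) / (4 * Real.pi * ((m+1:ℕ):ℝ)^4) ≤ y - x := by
    rw [div_le_iff₀ hω]
    nlinarith [hsin.2]
  have h2 := mul_le_mul_of_nonneg_left h1 ham
  have expand : b a (m+1-1) + 2 * a (m+1)
      + a (m+1) * (2*y - Real.sin (4 * Real.pi * ((m+1:ℕ):ℝ)^4 * y)/(4 * Real.pi * ((m+1:ℕ):ℝ)^4))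
      - (b a (m+1-1) + 2 * a (m+1)
      + a (m+1) * (2*x - Real.sin (4 * Real.pi * ((m+1:ℕ):ℝ)^4 * x)/(4 * Real.pi * ((m+1:ℕ):ℝ)^4)))
      = 2 * (a (m+1) * (y - x)) - a (m+1) * ((Real.sin (4 * Real.pi * ((m+1:ℕ):ℝ)^4 * y)
      - Real.sin (4 * Real.pi * ((m+1:ℕ):ℝ)^4 * x)) / (4 * Real.pi * ((m+1:ℕ):ℝ)^4)) := by
    ring
  rw [expand]
  nlinarith [h2]

lemma b_succ (a : ℕ → ℝ) (m : ℕ) : b a (m+1) = b a m + 4 * a (m+1) := by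
  unfold b; rw [Finset.sum_range_succ]; ring

lemma b_nonneg (a : ℕ → ℝ) (hpos : ∀ i, 1 ≤ i → 0 < a i) (m : ℕ) : 0 ≤ b a m := by
  unfold b
  have : ∀ i ∈ Finset.range m, 0 ≤ a (i+1) := fun i _ => (hpos (i+1) (Nat.le_add_left 1 i)).le
  have h4 := Finset.sum_nonneg this
  linarith

lemma b_mono (a : ℕ → ℝ) (hpos : ∀ i, 1 ≤ i → 0 < a i) {m m' : ℕ} (h : m ≤ m') :
    b a m ≤ b a m' := by
  unfold b
  have : ∑ k ∈ Finset.range m, a (k+1) ≤ ∑ k ∈ Finset.range m', a (k+1) :=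
    Finset.sum_le_sum_of_subset_of_nonneg (Finset.range_subset_range.2 h)
      (fun i _ _ => (hpos (i+1) (Nat.le_add_left 1 i)).le)
  linarith

lemma b_le_binf (a : ℕ → ℝ) (ha : StdHyp a) (m : ℕ) : b a m ≤ binf a := by
  unfold b binf
  have : ∑ k ∈ Finset.range m, a (k+1) ≤ ∑' n : ℕ, a (n+1) :=
    Summable.sum_le_tsum (Finset.range m) (fun i _ => (ha.1 (i+1) (Nat.le_add_left 1 i)).le) ha.2.1
  linarith

lemma a_le_tsum (a : ℕ → ℝ) (ha : StdHyp a) (m : ℕ) : a (m+1) ≤ ∑' n : ℕ, a (n+1) :=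
  Summable.le_tsum ha.2.1 m (fun j _ => (ha.1 (j+1) (Nat.le_add_left 1 j)).le)

lemma binf_pos (a : ℕ → ℝ) (ha : StdHyp a) : 0 < binf a := by
  unfold binf
  have h1 : a 1 ≤ ∑' n : ℕ, a (n+1) := a_le_tsum a ha 0
  have h2 := ha.1 1 le_rfl
  linarith

lemma binf_lt_one (a : ℕ → ℝ) (ha : StdHyp a) : binf a < 1 := by
  unfold binf
  have := ha.2.2
  linarith

lemma a_lt_quarter (a : ℕ → ℝ) (ha : StdHyp a) (m : ℕ) : a (m+1) < 1/4 :=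
  lt_of_le_of_lt (a_le_tsum a ha m) ha.2.2

/-- slope of the affine branches -/
def sN (a : ℕ → ℝ) (N : ℕ) : ℝ := lenJ a / (N:ℝ)

/-- left endpoints of the iterated images of `u_1` -/
def cg (a : ℕ → ℝ) (N : ℕ) (m : ℕ) : ℝ := binf a * ∑ i ∈ Finset.range m, (sN a N)^i

section facts
variable (a : ℕ → ℝ) (N : ℕ) (ha : StdHyp a) (hN : 1 ≤ N)
include ha hN
set_option linter.unusedSectionVars false

lemma lenJ_pos : 0 < lenJ a := by
  unfold lenJ; linarith [binf_lt_one a ha]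

lemma sN_pos : 0 < sN a N := by
  apply div_pos (lenJ_pos a N ha hN)
  exact_mod_cast hN

lemma sN_le_lenJ : sN a N ≤ lenJ a := by
  apply div_le_self (lenJ_pos a N ha hN).le
  exact_mod_cast hN

lemma sN_lt_one : sN a N < 1 :=
  lt_of_le_of_lt (sN_le_lenJ a N ha hN) (by unfold lenJ; linarith [binf_pos a ha])

lemma cg_zero : cg a N 0 = 0 := by simp [cg]

lemma cg_succ (m : ℕ) : cg a N (m+1) = binf a + sN a N * cg a N m := by
  unfold cg; rw [geom_sum_succ]; ring

lemma cg_succ' (m : ℕ) : cg a N (m+1) = cg a N m + (sN a N)^m * binf a := by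
  unfold cg; rw [Finset.sum_range_succ]; ring

lemma cg_nonneg (m : ℕ) : 0 ≤ cg a N m :=
  mul_nonneg (binf_pos a ha).le
    (Finset.sum_nonneg fun i _ => pow_nonneg (sN_pos a N ha hN).le i)

lemma cg_add_pow_le_one (m : ℕ) : cg a N m + (sN a N)^m ≤ 1 := by
  induction m with
  | zero => rw [cg_zero a N ha hN, pow_zero]; norm_num
  | succ p ih =>
    have h1 := sN_pos a N ha hN
    have h2 := sN_le_lenJ a N ha hN
    have h3 := cg_nonneg a N ha hN p
    rw [cg_succ a N ha hN, pow_succ]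
    calc binf a + sN a N * cg a N p + (sN a N)^p * sN a N
        = binf a + sN a N * (cg a N p + (sN a N)^p) := by ring
      _ ≤ binf a + sN a N * 1 := by nlinarith
      _ ≤ binf a + lenJ a := by linarith
      _ = 1 := by unfold lenJ; ring

lemma cg_ge_binf (m : ℕ) (hm : 1 ≤ m) : binf a ≤ cg a N m := by
  obtain ⟨p, rfl⟩ : ∃ p, m = p + 1 := ⟨m-1, (Nat.succ_pred_eq_of_pos hm).symm⟩
  rw [cg_succ a N ha hN]
  nlinarith [cg_nonneg a N ha hN p, sN_pos a N ha hN]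

lemma cg_ub (m : ℕ) (hm : 1 ≤ m) : cg a N m + (sN a N)^m ≤ binf a + sN a N := by
  obtain ⟨p, rfl⟩ : ∃ p, m = p + 1 := ⟨m-1, (Nat.succ_pred_eq_of_pos hm).symm⟩
  rw [cg_succ a N ha hN, pow_succ]
  have := cg_add_pow_le_one a N ha hN p
  nlinarith [sN_pos a N ha hN]

lemma hvlow (j : ℕ) (x : ℝ) (hx : 0 ≤ x) : b a j ≤ v a (j+1) x := by
  have hap := ha.1 (j+1) (Nat.le_add_left 1 j)
  have h := v_sub_ge a j hap.le hx
  rw [v_zero a j] at h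
  nlinarith [mul_nonneg hap.le hx]

lemma hvhigh (j : ℕ) (x : ℝ) (hx : x < 1) : v a (j+1) x < b a j + 2 * a (j+1) := by
  have hap := ha.1 (j+1) (Nat.le_add_left 1 j)
  have h := v_sub_ge a j hap.le hx.le
  rw [v_one a j] at h
  nlinarith [mul_pos hap (by linarith : (0:ℝ) < 1 - x)]

lemma hwlow (j : ℕ) (x : ℝ) (hx : 0 ≤ x) : b a j + 2 * a (j+1) ≤ w a (j+1) x := by
  have hap := ha.1 (j+1) (Nat.le_add_left 1 j)
  have h := w_sub_ge a j hap.le hx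
  rw [w_zero a j] at h
  nlinarith [mul_nonneg hap.le hx]

lemma hwhigh (j : ℕ) (x : ℝ) (hx : x < 1) : w a (j+1) x < b a (j+1) := by
  have hap := ha.1 (j+1) (Nat.le_add_left 1 j)
  have h := w_sub_ge a j hap.le hx.le
  rw [w_one a j] at h
  rw [b_succ]
  nlinarith [mul_pos hap (by linarith : (0:ℝ) < 1 - x)]

lemma v_strictMono (j : ℕ) : StrictMono (v a (j+1)) := by
  intro p q hpq
  have hap := ha.1 (j+1) (Nat.le_add_left 1 j)
  have h := v_sub_ge a j hap.le hpq.le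
  nlinarith [mul_pos hap (by linarith : (0:ℝ) < q - p)]

lemma hu1' (x : ℝ) : u a N 1 x = binf a + sN a N * x := by
  unfold u sN; push_cast; ring

lemma hu_eq' (j : ℕ) (x : ℝ) : u a N (j+1) x = binf a + (j:ℝ) * sN a N + sN a N * x := by
  unfold u sN; push_cast; ring

end facts

set_option maxHeartbeats 1000000 in
lemma key_iter (a : ℕ → ℝ) (N : ℕ) (ha : StdHyp a) (hN : 1 ≤ N) (n' K : ℕ) :
    ∀ m, m ≤ K → ∀ x ∈ Ico (0:ℝ) 1,
      (LR a N)^[m+1]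
          (bump (v a (n'+1) (cg a N K)) (v a (n'+1) (cg a N K + (sN a N)^K))) x
        = (sN a N)^m * vd a (n'+1) (cg a N m + (sN a N)^m * x)
          * bump (cg a N (K-m)) (cg a N (K-m) + (sN a N)^(K-m)) x := by
  have hapos' : ∀ j : ℕ, 0 < a (j+1) := fun j => ha.1 (j+1) (Nat.le_add_left 1 j)
  have hbinf0 := binf_pos a ha
  have hbinf1 := binf_lt_one a ha
  have hs0 := sN_pos a N ha hN
  have hs1 := sN_lt_one a N ha hN
  have hsle := sN_le_lenJ a N ha hN
  have hsm : StrictMono (v a (n'+1)) := v_strictMono a N ha hN n'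
  have hcK0 : 0 ≤ cg a N K := cg_nonneg a N ha hN K
  have hcK1 : cg a N K + (sN a N)^K ≤ 1 := cg_add_pow_le_one a N ha hN K
  set f : ℝ → ℝ :=
    bump (v a (n'+1) (cg a N K)) (v a (n'+1) (cg a N K + (sN a N)^K)) with hf_def
  have hABle : v a (n'+1) (cg a N K) ≤ v a (n'+1) (cg a N K + (sN a N)^K) :=
    hsm.monotone (by nlinarith [pow_pos hs0 K])
  have hA_ge : b a n' ≤ v a (n'+1) (cg a N K) := by
    rw [← v_zero a n']; exact hsm.monotone hcK0
  have hB_le : v a (n'+1) (cg a N K + (sN a N)^K) ≤ b a n' + 2 * a (n'+1) := by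
    rw [← v_one a n']; exact hsm.monotone hcK1
  have hB_le' : v a (n'+1) (cg a N K + (sN a N)^K) ≤ b a (n'+1) := by
    rw [b_succ]; nlinarith [hapos' n']
  intro m
  induction m with
  | zero =>
    intro _ x hx
    obtain ⟨hx0, hx1⟩ := hx
    rw [Function.iterate_one]
    simp only [LR]
    have hterm : ∀ j : ℕ, j ≠ n' →
        vd a (j+1) x * f (v a (j+1) x) + wd a (j+1) x * f (w a (j+1) x) = 0 := by
      intro j hj
      rcases lt_or_gt_of_ne hj with hlt | hgt
      · have hb1 : b a (j+1) ≤ b a n' := b_mono a ha.1 hlt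
        have hv0 : f (v a (j+1) x) = 0 := by
          apply bump_eq_zero_left _ hABle
          have h1 := hvhigh a N ha hN j x hx1
          have h2 := hapos' j
          calc v a (j+1) x < b a j + 2 * a (j+1) := h1
            _ ≤ b a (j+1) := by rw [b_succ]; nlinarith
            _ ≤ b a n' := hb1
            _ ≤ v a (n'+1) (cg a N K) := hA_ge
        have hw0 : f (w a (j+1) x) = 0 := by
          apply bump_eq_zero_left _ hABle
          exact lt_of_lt_of_le (hwhigh a N ha hN j x hx1) (hb1.trans hA_ge)
        rw [hv0, hw0]; ring
      · have hb1 : b a (n'+1) ≤ b a j := b_mono a ha.1 hgt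
        have hv0 : f (v a (j+1) x) = 0 := by
          apply bump_eq_zero_right _ hABle
          exact (hB_le'.trans hb1).trans (hvlow a N ha hN j x hx0)
        have hw0 : f (w a (j+1) x) = 0 := by
          apply bump_eq_zero_right _ hABle
          have h2 := hapos' j
          calc v a (n'+1) (cg a N K + (sN a N)^K) ≤ b a j := hB_le'.trans hb1
            _ ≤ b a j + 2 * a (j+1) := by nlinarith
            _ ≤ w a (j+1) x := hwlow a N ha hN j x hx0
        rw [hv0, hw0]; ring
    rw [tsum_eq_single n' hterm]
    have hfw : f (w a (n'+1) x) = 0 := by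
      apply bump_eq_zero_right _ hABle
      exact hB_le.trans (hwlow a N ha hN n' x hx0)
    have hfv : f (v a (n'+1) x) = bump (cg a N K) (cg a N K + (sN a N)^K) x := by
      rw [hf_def]
      simp only [bump, stepf, hsm.le_iff_le]
    have hfu : ∀ j ∈ Finset.range N, f (u a N (j+1) x) = 0 := by
      intro j _
      apply bump_eq_zero_right _ hABle
      rw [hu_eq' a N ha hN j x]
      have hb2 : b a (n'+1) ≤ binf a := b_le_binf a ha (n'+1)
      have hj0 : (0:ℝ) ≤ (j:ℝ) := Nat.cast_nonneg j
      calc v a (n'+1) (cg a N K + (sN a N)^K) ≤ binf a := hB_le'.trans hb2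
        _ ≤ binf a + (j:ℝ) * sN a N + sN a N * x := by nlinarith
    rw [Finset.sum_congr rfl hfu, Finset.sum_const, smul_zero, mul_zero, add_zero,
      hfw, mul_zero, add_zero, hfv]
    rw [cg_zero a N ha hN]
    norm_num
  | succ p ih =>
    intro hpK x hx
    obtain ⟨hx0, hx1⟩ := hx
    have hpK' : p ≤ K := Nat.le_of_succ_le hpK
    have ihx := ih hpK'
    obtain ⟨i, hi⟩ : ∃ i, K - p = i + 1 := ⟨K - p - 1, by omega⟩
    have hKp1 : K - (p+1) = i := by omega
    rw [Function.iterate_succ_apply']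
    simp only [LR]
    have hbinf_le : binf a ≤ cg a N (K - p) := cg_ge_binf a N ha hN (K-p) (by omega)
    have hub : cg a N (K - p) + (sN a N)^(K-p) ≤ binf a + sN a N :=
      cg_ub a N ha hN (K-p) (by omega)
    have hbump_nn : cg a N (K-p) ≤ cg a N (K-p) + (sN a N)^(K-p) := by
      nlinarith [pow_nonneg hs0.le (K-p)]
    have htz : ∀ j : ℕ,
        vd a (j+1) x * (LR a N)^[p+1] f (v a (j+1) x)
          + wd a (j+1) x * (LR a N)^[p+1] f (w a (j+1) x) = 0 := by
      intro j
      have hbj : b a (j+1) ≤ binf a := b_le_binf a ha (j+1)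
      have hbjnn : 0 ≤ b a j := b_nonneg a ha.1 j
      have h2 := hapos' j
      have hvb : v a (j+1) x < b a (j+1) := by
        have := hvhigh a N ha hN j x hx1; rw [b_succ]; nlinarith
      have hvm : v a (j+1) x ∈ Ico (0:ℝ) 1 := by
        constructor
        · exact hbjnn.trans (hvlow a N ha hN j x hx0)
        · linarith
      have hwm : w a (j+1) x ∈ Ico (0:ℝ) 1 := by
        constructor
        · have := hwlow a N ha hN j x hx0; nlinarith
        · have := hwhigh a N ha hN j x hx1; linarith
      have hv0 : (LR a N)^[p+1] f (v a (j+1) x) = 0 := by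
        rw [ihx _ hvm, bump_eq_zero_left _ hbump_nn, mul_zero]
        linarith
      have hw0 : (LR a N)^[p+1] f (w a (j+1) x) = 0 := by
        rw [ihx _ hwm, bump_eq_zero_left _ hbump_nn, mul_zero]
        have := hwhigh a N ha hN j x hx1
        linarith
      rw [hv0, hw0]; ring
    have htsum : (∑' (j:ℕ), (vd a (j+1) x * (LR a N)^[p+1] f (v a (j+1) x)
        + wd a (j+1) x * (LR a N)^[p+1] f (w a (j+1) x))) = 0 := by
      calc (∑' (j:ℕ), (vd a (j+1) x * (LR a N)^[p+1] f (v a (j+1) x)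
            + wd a (j+1) x * (LR a N)^[p+1] f (w a (j+1) x)))
          = ∑' (_:ℕ), (0:ℝ) := tsum_congr htz
        _ = 0 := tsum_zero
    have hNs : (N:ℝ) * sN a N = lenJ a := by
      unfold sN; field_simp
    have husum : ∑ j ∈ Finset.range N, (LR a N)^[p+1] f (u a N (j+1) x)
        = (LR a N)^[p+1] f (u a N (0+1) x) := by
      apply Finset.sum_eq_single_of_mem 0 (Finset.mem_range.2 hN)
      intro j hjN hj0
      have hj1 : (1:ℝ) ≤ (j:ℝ) := by
        have : 1 ≤ j := Nat.one_le_iff_ne_zero.2 hj0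
        exact_mod_cast this
      have hjN' : (j:ℝ) + 1 ≤ (N:ℝ) := by
        have : j + 1 ≤ N := Finset.mem_range.1 hjN
        exact_mod_cast this
      have hum : u a N (j+1) x ∈ Ico (0:ℝ) 1 := by
        rw [hu_eq' a N ha hN j x]
        constructor
        · nlinarith
        · have h3 : binf a + (j:ℝ)*sN a N + sN a N*x < binf a + (N:ℝ)*sN a N := by
            nlinarith
          rw [hNs] at h3
          unfold lenJ at h3
          linarith
      rw [ihx _ hum, bump_eq_zero_right _ hbump_nn, mul_zero]
      rw [hu_eq' a N ha hN j x]
      nlinarith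
    have hu01 : u a N (0+1) x = binf a + sN a N * x := by
      rw [hu_eq' a N ha hN 0 x]; norm_num
    rw [htsum, husum, zero_add, hu01]
    have hum1 : binf a + sN a N * x ∈ Ico (0:ℝ) 1 := by
      constructor
      · nlinarith
      · have h1 : binf a + sN a N * x < binf a + sN a N := by nlinarith
        have h2 : binf a + sN a N ≤ binf a + lenJ a := by linarith
        unfold lenJ at h2
        linarith
    rw [ihx _ hum1]
    have harg : cg a N p + (sN a N)^p * (binf a + sN a N*x)
        = cg a N (p+1) + (sN a N)^(p+1) * x := by
      rw [cg_succ' a N ha hN p, pow_succ]; ring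
    have hbump : bump (cg a N (K-p)) (cg a N (K-p) + (sN a N)^(K-p)) (binf a + sN a N*x)
        = bump (cg a N (K-(p+1))) (cg a N (K-(p+1)) + (sN a N)^(K-(p+1))) x := by
      rw [hi, hKp1, cg_succ a N ha hN, pow_succ]
      have e1 : (binf a + sN a N * cg a N i ≤ binf a + sN a N * x) = (cg a N i ≤ x) := by
        apply propext
        rw [add_le_add_iff_left, mul_le_mul_iff_right₀ hs0]
      have e2 : (binf a + sN a N * cg a N i + (sN a N)^i * sN a N ≤ binf a + sN a N * x)
          = (cg a N i + (sN a N)^i ≤ x) := by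
        apply propext
        have hre : binf a + sN a N * cg a N i + (sN a N)^i * sN a N
            = binf a + sN a N * (cg a N i + (sN a N)^i) := by ring
        rw [hre, add_le_add_iff_left, mul_le_mul_iff_right₀ hs0]
      simp only [bump, stepf, e1, e2]
    rw [harg, hbump, show lenJ a / (N:ℝ) = sN a N from rfl, pow_succ]
    ring

set_option maxHeartbeats 1000000 in
/-- if `limsup n⁴ a_n = ∞`, then for every `k ≥ 1` the operator `L^k`
does not act continuously on bounded variation functions. -/
theorem stmt2 (a : ℕ → ℝ) (N : ℕ) (hN : 1 ≤ N) (ha : StdHyp a)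
    (hlim : ∀ C : ℝ, ∃ᶠ n : ℕ in atTop, C < (n : ℝ) ^ 4 * a n) :
    ∀ k : ℕ, 1 ≤ k → ∀ C : ℝ, 0 < C → ∃ f : ℝ → ℝ,
      eVariationOn f (Ico (0:ℝ) 1) ≤ 2 ∧
      (∀ x ∈ Ico (0:ℝ) 1, |f x| ≤ 1) ∧
      ENNReal.ofReal C < eVariationOn ((LR a N)^[k] f) (Ico (0:ℝ) 1) := by
  intro k hk C hC
  obtain ⟨K, rfl⟩ : ∃ K, k = K + 1 := ⟨k-1, (Nat.succ_pred_eq_of_pos hk).symm⟩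
  have hs0 := sN_pos a N ha hN
  have hr0 : 0 < (sN a N)^K := pow_pos hs0 K
  -- choose n = n' + 1 with n⁴ a_n large
  obtain ⟨n, hnC, hn1⟩ : ∃ n : ℕ,
      (C + (sN a N)^K)/(8*((sN a N)^K)^2) < (n:ℝ)^4 * a n ∧ 1 ≤ n := by
    obtain ⟨n, h1, h2⟩ := ((hlim ((C + (sN a N)^K)/(8*((sN a N)^K)^2))).and_eventually
      (eventually_ge_atTop 1)).exists
    exact ⟨n, h1, h2⟩
  obtain ⟨n', rfl⟩ : ∃ p, n = p + 1 := ⟨n-1, (Nat.succ_pred_eq_of_pos hn1).symm⟩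
  have hapos : 0 < a (n'+1) := ha.1 (n'+1) (Nat.le_add_left 1 n')
  refine ⟨bump (v a (n'+1) (cg a N K)) (v a (n'+1) (cg a N K + (sN a N)^K)),
    eVariationOn_bump_le _ _ _, fun x _ => abs_bump_le _ _ x, ?_⟩
  -- the value of the K+1-st iterate
  have hgval : ∀ x ∈ Ico (0:ℝ) 1,
      (LR a N)^[K+1]
          (bump (v a (n'+1) (cg a N K)) (v a (n'+1) (cg a N K + (sN a N)^K))) x
        = (sN a N)^K * (a (n'+1) * (2 + Real.cos (4 * Real.pi * (((n'+1:ℕ)):ℝ)^4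
            * (cg a N K + (sN a N)^K * x)))) := by
    intro x hx
    rw [key_iter a N ha hN n' K K le_rfl x hx, Nat.sub_self, vd_eq]
    rw [cg_zero a N ha hN, pow_zero,
      bump_eq_one (by linarith [hx.1] : (0:ℝ) ≤ x) (by linarith [hx.2] : x < 0 + 1)]
    ring
  -- numeric part
  have hn4 : (0:ℝ) < (((n'+1:ℕ)):ℝ)^4 := by positivity
  have han4 : a (n'+1) ≤ 1/4 := (a_lt_quarter a ha n').le
  have h2ra : (0:ℝ) < 2*(sN a N)^K*a (n'+1) := by positivity
  obtain ⟨P, hPC, hP2⟩ : ∃ P : ℕ, C < (P:ℝ) * (2*((sN a N)^K*a (n'+1)))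
      ∧ (P:ℝ) + 1 ≤ 4*(((n'+1:ℕ)):ℝ)^4*(sN a N)^K := by
    have h8 : (0:ℝ) < 8*((sN a N)^K)^2 := by positivity
    have hCr : C + (sN a N)^K
        < 8*((sN a N)^K)^2 * ((((n'+1:ℕ)):ℝ)^4 * a (n'+1)) := by
      have := (div_lt_iff₀ h8).1 hnC
      nlinarith [this]
    refine ⟨⌊C / (2*(sN a N)^K*a (n'+1))⌋₊ + 1, ?_, ?_⟩
    · have hPgt : C / (2*(sN a N)^K*a (n'+1))
          < ((⌊C / (2*(sN a N)^K*a (n'+1))⌋₊ + 1 : ℕ):ℝ) := by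
        push_cast; exact Nat.lt_floor_add_one _
      have := (div_lt_iff₀ h2ra).1 hPgt
      push_cast
      push_cast at this
      linarith
    · have hfl : (⌊C / (2*(sN a N)^K*a (n'+1))⌋₊ : ℝ) ≤ C / (2*(sN a N)^K*a (n'+1)) :=
        Nat.floor_le (by positivity)
      have key2 : C/(2*(sN a N)^K*a (n'+1)) + 2 ≤ 4*(((n'+1:ℕ)):ℝ)^4*(sN a N)^K := by
        rw [div_add' _ _ _ h2ra.ne', div_le_iff₀ h2ra]
        have hprod : 4*(sN a N)^K * a (n'+1) ≤ 4*(sN a N)^K * (1/4) :=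
          mul_le_mul_of_nonneg_left han4 (by positivity)
        nlinarith [hCr, hprod]
      rw [Nat.cast_add, Nat.cast_one]
      linarith
  obtain ⟨q0, hq0ge, hq0lt⟩ : ∃ q0 : ℤ, 4*(((n'+1:ℕ)):ℝ)^4 * cg a N K ≤ (q0:ℝ)
      ∧ (q0:ℝ) < 4*(((n'+1:ℕ)):ℝ)^4 * cg a N K + 1 :=
    ⟨⌈4*(((n'+1:ℕ)):ℝ)^4 * cg a N K⌉, Int.le_ceil _, Int.ceil_lt_add_one _⟩
  set y : ℕ → ℝ := fun i =>
    (((q0 + (min i P : ℕ) : ℤ):ℝ) / (4*(((n'+1:ℕ)):ℝ)^4) - cg a N K) / (sN a N)^K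
    with hy_def
  have hymem : ∀ i, y i ∈ Ico (0:ℝ) 1 := by
    intro i
    have hcast : ((q0 + (min i P : ℕ) : ℤ):ℝ) = (q0:ℝ) + ((min i P : ℕ):ℝ) := by
      push_cast; ring
    constructor
    · simp only [hy_def]
      apply div_nonneg _ hr0.le
      rw [sub_nonneg, le_div_iff₀ (by positivity)]
      rw [hcast]
      have h0 : (0:ℝ) ≤ ((min i P : ℕ):ℝ) := Nat.cast_nonneg _
      linarith [hq0ge]
    · simp only [hy_def]
      rw [div_lt_one hr0, sub_lt_iff_lt_add, div_lt_iff₀ (by positivity), hcast]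
      have hmin : ((min i P : ℕ):ℝ) ≤ (P:ℝ) := by exact_mod_cast min_le_right i P
      linarith [hq0lt, hP2]
  have hymono : Monotone y := by
    intro i i' h
    simp only [hy_def]
    have hmin : ((min i P : ℕ):ℝ) ≤ ((min i' P : ℕ):ℝ) := by
      exact_mod_cast min_le_min h (le_refl P)
    have hcast : ∀ t : ℕ, ((q0 + (t : ℕ) : ℤ):ℝ) = (q0:ℝ) + (t:ℝ) := by
      intro t; push_cast; ring
    rw [hcast, hcast]
    have hnum : (q0:ℝ) + ((min i P : ℕ):ℝ) ≤ (q0:ℝ) + ((min i' P : ℕ):ℝ) := by linarith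
    have hd1 : ((q0:ℝ) + ((min i P : ℕ):ℝ)) / (4*(((n'+1:ℕ)):ℝ)^4)
        ≤ ((q0:ℝ) + ((min i' P : ℕ):ℝ)) / (4*(((n'+1:ℕ)):ℝ)^4) :=
      div_le_div_of_nonneg_right hnum (by positivity)
    have hd2 := sub_le_sub_right hd1 (cg a N K)
    exact div_le_div_of_nonneg_right hd2 hr0.le
  have hval : ∀ i, (LR a N)^[K+1]
      (bump (v a (n'+1) (cg a N K)) (v a (n'+1) (cg a N K + (sN a N)^K))) (y i)
      = (sN a N)^K * a (n'+1) * (2 + ((-1:ℝ)) ^ (q0 + (min i P : ℕ) : ℤ)) := by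
    intro i
    rw [hgval (y i) (hymem i)]
    have harg : 4 * Real.pi * (((n'+1:ℕ)):ℝ)^4 * (cg a N K + (sN a N)^K * y i)
        = ((q0 + (min i P : ℕ) : ℤ):ℝ) * Real.pi := by
      simp only [hy_def]
      field_simp
      ring
    rw [harg, cos_int_pi]
    ring
  have hstep : ∀ i ∈ Finset.range P,
      edist ((LR a N)^[K+1]
          (bump (v a (n'+1) (cg a N K)) (v a (n'+1) (cg a N K + (sN a N)^K))) (y (i+1)))
        ((LR a N)^[K+1]
          (bump (v a (n'+1) (cg a N K)) (v a (n'+1) (cg a N K + (sN a N)^K))) (y i))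
        = ENNReal.ofReal (2*((sN a N)^K*a (n'+1))) := by
    intro i hiP
    have hiP' : i < P := Finset.mem_range.1 hiP
    have hmin1 : min (i+1) P = i+1 := min_eq_left hiP'
    have hmin2 : min i P = i := min_eq_left hiP'.le
    rw [hval (i+1), hval i, hmin1, hmin2]
    rw [edist_dist, Real.dist_eq]
    congr 1
    have hzpow : ((-1:ℝ)) ^ (q0 + ((i+1:ℕ):ℤ)) = -((-1:ℝ)) ^ (q0 + ((i:ℕ):ℤ)) := by
      have h1 : (q0 + ((i+1:ℕ):ℤ)) = (q0 + ((i:ℕ):ℤ)) + 1 := by push_cast; ring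
      rw [h1, zpow_add_one₀ (by norm_num : (-1:ℝ) ≠ 0)]
      ring
    rw [hzpow]
    rcases Int.even_or_odd (q0 + ((i:ℕ):ℤ)) with he | ho
    · rw [he.neg_one_zpow]
      rw [abs_of_nonpos (by nlinarith [hr0, hapos])]
      ring
    · rw [ho.neg_one_zpow]
      rw [abs_of_nonneg (by nlinarith [hr0, hapos])]
      ring
  refine lt_of_lt_of_le ?_ (eVariationOn.sum_le (n := P) hymono (fun i => hymem i))
  rw [Finset.sum_congr rfl hstep, Finset.sum_const, Finset.card_range, nsmul_eq_mul,
    ← ENNReal.ofReal_natCast P, ← ENNReal.ofReal_mul (Nat.cast_nonneg P)]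
  exact (ENNReal.ofReal_lt_ofReal_iff (lt_trans hC hPC)).2 hPC

end Gouezel
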